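/- Let I be a finite fact set with minimal-violation family 𝒱 and let 𝒲^l be the witness family of Q[a_l]. Then a_l is a consistent answer (Q[a_l] holds on every repair of I) if and only if for every consistent subset S of I with the property that each f ∈ I \ S has a near-violation contained in S, some W ∈ 𝒲^l is contained in S. -/
import Mathlib


/-- `a_l` is a consistent answer (its witness family `𝒲` hits every repair of
`I`, where repairs are the maximal consistent subsets w.r.t. the minimal
violations `𝒱`) iff every consistent subset `S ⊆ I` such that each fact
`f ∈ I \ S` has a near-violation (a set `V \ {f}` with `V ∈ 𝒱`, `f ∈ V`)
contained in `S`, contains some witness `W ∈ 𝒲`. -/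
theorem stmt_19 {α : Type*} [DecidableEq α]
    (I : Finset α) (𝒱 : Finset (Finset α)) (𝒲 : Finset (Finset α))
    (hV : ∀ V ∈ 𝒱, V.Nonempty ∧ V ⊆ I) :
    (∀ J : Finset α, J ⊆ I → (∀ V ∈ 𝒱, ¬ V ⊆ J) →
        (∀ J' : Finset α, J' ⊆ I → (∀ V ∈ 𝒱, ¬ V ⊆ J') → J ⊆ J' → J' = J) →
        ∃ W ∈ 𝒲, W ⊆ J) ↔
    (∀ S : Finset α, S ⊆ I → (∀ V ∈ 𝒱, ¬ V ⊆ S) →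
        (∀ f ∈ I \ S, ∃ V ∈ 𝒱, f ∈ V ∧ V.erase f ⊆ S) →
        ∃ W ∈ 𝒲, W ⊆ S) := by
  constructor
  · intro h S hSI hScons hnear
    refine h S hSI hScons ?_
    intro J' hJ'I hJ'cons hSJ'
    by_contra hne
    obtain ⟨f, hfJ', hfS⟩ := Finset.not_subset.mp (fun hsub => hne (le_antisymm hsub hSJ'))
    obtain ⟨V, hVmem, hfV, hVS⟩ := hnear f (Finset.mem_sdiff.mpr ⟨hJ'I hfJ', hfS⟩)
    refine hJ'cons V hVmem ?_
    intro x hxV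
    by_cases hx : x = f
    · exact hx ▸ hfJ'
    · exact hSJ' (hVS (Finset.mem_erase.mpr ⟨hx, hxV⟩))
  · intro h J hJI hJcons hJmax
    refine h J hJI hJcons ?_
    intro f hf
    obtain ⟨hfI, hfJ⟩ := Finset.mem_sdiff.mp hf
    by_contra hnone
    push_neg at hnone
    have hins : insert f J = J := by
      refine hJmax (insert f J) ?_ ?_ (Finset.subset_insert _ _)
      · exact Finset.insert_subset hfI hJI
      · intro V hVm hVsub
        by_cases hfV : f ∈ V
        · refine hnone V hVm hfV ?_
          intro x hx
          obtain ⟨hxf, hxV⟩ := Finset.mem_erase.mp hx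
          rcases Finset.mem_insert.mp (hVsub hxV) with h' | h'
          · exact absurd h' hxf
          · exact h'
        · refine hJcons V hVm fun x hx => ?_
          rcases Finset.mem_insert.mp (hVsub hx) with h' | h'
          · exact absurd (h' ▸ hx) hfV
          · exact h'
    exact hfJ (hins ▸ Finset.mem_insert_self f J)
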